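/- Let L/K be a totally ramified Galois extension of degree p of complete discrete valued fields of characteristic p, with ramification break s, and let λ ∈ L be a root of X^p − X − f where f ∈ K satisfies v_K(f) = −s with s coprime to p. Then the set of elements of O_L of trace zero is O_L^{tr=0} = { Σ_{i=0}^{p−2} a_i λ^i : a_i ∈ K with v_K(a_i) ≥ is/p for all i }. -/

import Mathlib

/-!
Common background: complete discretely valued fields, their valuation rings,
residue fields, Galois action on the valuation ring, truncated Witt vector
functoriality, and ramification breaks.
-/

noncomputable section

open scoped Classical

/-- A field equipped with a normalized (i.e. surjective onto `ℤ`) discrete additive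
valuation `v : K → WithTop ℤ` with respect to which it is complete. -/
structure CompleteDiscreteValuation (K : Type*) [Field K] where
  v : K → WithTop ℤ
  eq_top_iff : ∀ x : K, v x = ⊤ ↔ x = 0
  map_one : v 1 = 0
  map_mul : ∀ x y : K, v (x * y) = v x + v y
  min_le_add : ∀ x y : K, min (v x) (v y) ≤ v (x + y)
  surjective : ∀ n : ℤ, ∃ x : K, v x = (n : WithTop ℤ)
  complete : ∀ x : ℕ → K,
      (∀ n : ℕ, ((n : ℤ) : WithTop ℤ) ≤ v (x (n + 1) - x n)) →
      ∃ y : K, ∀ n : ℕ, ((n : ℤ) : WithTop ℤ) ≤ v (y - x n)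

namespace TruncatedWittVector

variable {p n : ℕ} [hp : Fact p.Prime] {R S : Type*} [CommRing R] [CommRing S]

lemma truncateFun_congr_map (f : R →+* S) (a b : WittVector p R)
    (h : WittVector.truncateFun n a = WittVector.truncateFun n b) :
    WittVector.truncateFun n (WittVector.map f a) =
      WittVector.truncateFun n (WittVector.map f b) := by
  ext i
  have hc := congrArg (fun z => TruncatedWittVector.coeff i z) h
  simp only [WittVector.coeff_truncateFun] at hc ⊢
  rw [WittVector.map_coeff, WittVector.map_coeff, hc]

/-- Functoriality of truncated Witt vectors: the ring homomorphism
`W_n(R) → W_n(S)` induced by `f : R → S`, acting componentwise. -/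
def map (f : R →+* S) : TruncatedWittVector p n R →+* TruncatedWittVector p n S where
  toFun x := WittVector.truncateFun n (WittVector.map f x.out)
  map_one' := by
    show WittVector.truncateFun n (WittVector.map f (1 : TruncatedWittVector p n R).out) = 1
    have h : WittVector.truncateFun n ((1 : TruncatedWittVector p n R)).out =
        WittVector.truncateFun n (1 : WittVector p R) := by
      rw [truncateFun_out, WittVector.truncateFun_one]
    have := truncateFun_congr_map f _ _ h
    rw [this, map_one, WittVector.truncateFun_one]
  map_mul' x y := by
    show WittVector.truncateFun n (WittVector.map f (x * y).out) =
      WittVector.truncateFun n (WittVector.map f x.out) *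
        WittVector.truncateFun n (WittVector.map f y.out)
    have h : WittVector.truncateFun n (x * y).out =
        WittVector.truncateFun n (x.out * y.out) := by
      rw [truncateFun_out, WittVector.truncateFun_mul, truncateFun_out, truncateFun_out]
    have := truncateFun_congr_map f _ _ h
    rw [this, map_mul, WittVector.truncateFun_mul]
  map_zero' := by
    show WittVector.truncateFun n (WittVector.map f (0 : TruncatedWittVector p n R).out) = 0
    have h : WittVector.truncateFun n ((0 : TruncatedWittVector p n R)).out =
        WittVector.truncateFun n (0 : WittVector p R) := by
      rw [truncateFun_out, WittVector.truncateFun_zero]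
    have := truncateFun_congr_map f _ _ h
    rw [this, map_zero, WittVector.truncateFun_zero]
  map_add' x y := by
    show WittVector.truncateFun n (WittVector.map f (x + y).out) =
      WittVector.truncateFun n (WittVector.map f x.out) +
        WittVector.truncateFun n (WittVector.map f y.out)
    have h : WittVector.truncateFun n (x + y).out =
        WittVector.truncateFun n (x.out + y.out) := by
      rw [truncateFun_out, WittVector.truncateFun_add, truncateFun_out, truncateFun_out]
    have := truncateFun_congr_map f _ _ h
    rw [this, map_add, WittVector.truncateFun_add]

@[simp]
lemma map_coeff (f : R →+* S) (x : TruncatedWittVector p n R) (i : Fin n) :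
    (map f x).coeff i = f (x.coeff i) := by
  show (WittVector.truncateFun n (WittVector.map f x.out)).coeff i = f (x.coeff i)
  rw [WittVector.coeff_truncateFun, WittVector.map_coeff, coeff_out]

end TruncatedWittVector

namespace CompleteDiscreteValuation

variable {K : Type*} [Field K]

lemma v_zero (w : CompleteDiscreteValuation K) : w.v 0 = ⊤ := (w.eq_top_iff 0).2 rfl

lemma v_neg_one (w : CompleteDiscreteValuation K) : w.v (-1) = 0 := by
  have h := w.map_mul (-1) (-1)
  rw [neg_mul_neg, one_mul, w.map_one] at h
  cases h' : w.v (-1) with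
  | top =>
      exact absurd ((w.eq_top_iff (-1)).1 h') (by norm_num)
  | coe a =>
      rw [h'] at h
      have ha : a + a = 0 := by exact_mod_cast h.symm
      have : a = 0 := by omega
      rw [this]
      rfl

lemma v_neg (w : CompleteDiscreteValuation K) (x : K) : w.v (-x) = w.v x := by
  rw [show -x = -1 * x by ring, w.map_mul, w.v_neg_one, zero_add]

/-- The valuation ring (ring of integers) of a complete discretely valued field. -/
def integers (w : CompleteDiscreteValuation K) : Subring K where
  carrier := {x : K | 0 ≤ w.v x}
  zero_mem' := by simp [Set.mem_setOf_eq, v_zero]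
  one_mem' := by simp [Set.mem_setOf_eq, w.map_one]
  add_mem' {a b} ha hb := le_trans (le_min ha hb) (w.min_le_add a b)
  mul_mem' {a b} ha hb := by
    simp only [Set.mem_setOf_eq] at *
    rw [w.map_mul]
    exact add_nonneg ha hb
  neg_mem' {a} ha := by
    simp only [Set.mem_setOf_eq] at *
    rwa [w.v_neg]

lemma mem_integers_iff (w : CompleteDiscreteValuation K) (x : K) :
    x ∈ w.integers ↔ 0 ≤ w.v x := Iff.rfl

/-- The maximal ideal of the valuation ring. -/
def maxIdeal (w : CompleteDiscreteValuation K) : Ideal w.integers where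
  carrier := {x | 0 < w.v (x : K)}
  zero_mem' := by simp [Set.mem_setOf_eq, v_zero]
  add_mem' {a b} ha hb := lt_of_lt_of_le (lt_min ha hb) (w.min_le_add (a : K) (b : K))
  smul_mem' c x hx := by
    simp only [Set.mem_setOf_eq] at *
    show 0 < w.v ((c : K) * (x : K))
    rw [w.map_mul]
    exact lt_of_lt_of_le hx (le_add_of_nonneg_left c.2)

/-- The residue field of a complete discretely valued field. -/
abbrev residueField (w : CompleteDiscreteValuation K) := w.integers ⧸ w.maxIdeal

section Extension

variable {L : Type*} [Field L] [Algebra K L]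

/-- The ring homomorphism between valuation rings induced by the inclusion `K ⟶ L`,
when the valuation of `L` restricts to `e` times the valuation of `K`. -/
def integerMap (wK : CompleteDiscreteValuation K) (wL : CompleteDiscreteValuation L)
    (e : ℕ) (hcomp : ∀ x : K, wL.v (algebraMap K L x) = e • wK.v x) :
    wK.integers →+* wL.integers where
  toFun x := ⟨algebraMap K L x, by
    rw [mem_integers_iff, hcomp]
    exact nsmul_nonneg x.2 e⟩
  map_one' := Subtype.ext (by simp)
  map_mul' x y := Subtype.ext (by simp)
  map_zero' := Subtype.ext (by simp)
  map_add' x y := Subtype.ext (by simp)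

/-- The induced homomorphism between the residue fields. -/
def residueMap (wK : CompleteDiscreteValuation K) (wL : CompleteDiscreteValuation L)
    (e : ℕ) (he : 0 < e) (hcomp : ∀ x : K, wL.v (algebraMap K L x) = e • wK.v x) :
    wK.residueField →+* wL.residueField :=
  Ideal.Quotient.lift wK.maxIdeal
    ((Ideal.Quotient.mk wL.maxIdeal).comp (integerMap wK wL e hcomp))
    (by
      intro a ha
      rw [RingHom.comp_apply, Ideal.Quotient.eq_zero_iff_mem]
      show 0 < wL.v (algebraMap K L (a : K))
      rw [hcomp]
      calc (0 : WithTop ℤ) < wK.v (a : K) := ha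
        _ = 1 • wK.v (a : K) := (one_nsmul _).symm
        _ ≤ e • wK.v (a : K) := nsmul_le_nsmul_left (le_of_lt ha) he)

/-- The induced extension of residue fields `k_L / k_K` is separable. -/
def ResidueSeparable (wK : CompleteDiscreteValuation K) (wL : CompleteDiscreteValuation L)
    (e : ℕ) (he : 0 < e) (hcomp : ∀ x : K, wL.v (algebraMap K L x) = e • wK.v x) : Prop :=
  letI : Algebra wK.residueField wL.residueField := (residueMap wK wL e he hcomp).toAlgebra
  Algebra.IsSeparable wK.residueField wL.residueField

/-- A `K`-algebra automorphism of `L` (necessarily preserving the valuation, which is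
recorded in the hypothesis `hGal`) restricts to a ring homomorphism of the valuation
ring `O_L`.  This is the Galois action on `O_L`. -/
def galRes (wL : CompleteDiscreteValuation L)
    (hGal : ∀ (σ : L ≃ₐ[K] L) (x : L), wL.v (σ x) = wL.v x) (σ : L ≃ₐ[K] L) :
    wL.integers →+* wL.integers where
  toFun x := ⟨σ x, by rw [mem_integers_iff, hGal]; exact x.2⟩
  map_one' := Subtype.ext (by simp)
  map_mul' x y := Subtype.ext (by simp)
  map_zero' := Subtype.ext (by simp)
  map_add' x y := Subtype.ext (by simp)

/-- The statement that the action of the Galois group of `L/K` on `O_L/m_L^{s+1}`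
is faithful: every nontrivial automorphism moves some integer of `L` by an element
of valuation at most `s`. -/
def FaithfulOnQuotient (K : Type*) [Field K] {L : Type*} [Field L] [Algebra K L]
    (wL : CompleteDiscreteValuation L) (s : ℕ) : Prop :=
  ∀ σ : L ≃ₐ[K] L, σ ≠ 1 → ∃ x : L, 0 ≤ wL.v x ∧ wL.v (σ x - x) ≤ ((s : ℤ) : WithTop ℤ)

/-- `s` is the ramification break (lower ramification jump) of `L/K`: the smallest
nonnegative integer such that the induced action of `Gal(L/K)` on `O_L/m_L^{s+1}`
is faithful. -/
def IsRamificationBreak (K : Type*) [Field K] {L : Type*} [Field L] [Algebra K L]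
    (wL : CompleteDiscreteValuation L) (s : ℕ) : Prop :=
  FaithfulOnQuotient K wL s ∧ ∀ t : ℕ, t < s → ¬ FaithfulOnQuotient K wL t

end Extension

end CompleteDiscreteValuation

open CompleteDiscreteValuation

namespace CompleteDiscreteValuation
variable {F : Type*} [Field F] (w : CompleteDiscreteValuation F)

lemma v_add_eq_left {x y : F} (h : w.v x < w.v y) : w.v (x + y) = w.v x := by
  have h1 : w.v x ≤ w.v (x + y) := le_trans (le_min le_rfl h.le) (w.min_le_add x y)
  have h2 : min (w.v (x + y)) (w.v y) ≤ w.v x := by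
    have h3 := w.min_le_add (x + y) (-y)
    rwa [w.v_neg, add_neg_cancel_right] at h3
  rcases min_le_iff.mp h2 with h4 | h4
  · exact le_antisymm h4 h1
  · exact absurd (lt_of_lt_of_le h h4) (lt_irrefl _)

lemma v_add_eq_of_ne {x y : F} (h : w.v x ≠ w.v y) :
    w.v (x + y) = min (w.v x) (w.v y) := by
  rcases lt_or_gt_of_ne h with hlt | hlt
  · rw [w.v_add_eq_left hlt, min_eq_left hlt.le]
  · rw [add_comm, w.v_add_eq_left hlt, min_eq_right hlt.le]

lemma v_sum_eq_inf {ι : Type*} (t : ι → F) (S : Finset ι)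
    (hd : ∀ i ∈ S, ∀ j ∈ S, i ≠ j → w.v (t i) = w.v (t j) → w.v (t i) = ⊤) :
    w.v (∑ i ∈ S, t i) = S.inf (fun i => w.v (t i)) := by
  induction S using Finset.induction_on with
  | empty => simp [w.v_zero]
  | @insert a S' ha ih =>
      have hd' : ∀ i ∈ S', ∀ j ∈ S', i ≠ j → w.v (t i) = w.v (t j) → w.v (t i) = ⊤ :=
        fun i hi j hj => hd i (Finset.mem_insert_of_mem hi) j (Finset.mem_insert_of_mem hj)
      have ihv := ih hd'
      rw [Finset.sum_insert ha, Finset.inf_insert]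
      by_cases hne : w.v (t a) = w.v (∑ i ∈ S', t i)
      · -- both must be ⊤
        rcases S'.eq_empty_or_nonempty with hS | hS
        · subst hS
          simp only [Finset.sum_empty, w.v_zero] at hne
          have hta : t a = 0 := (w.eq_top_iff _).mp hne
          simp [hta, w.v_zero]
        · obtain ⟨j, hj, hjeq⟩ := Finset.exists_mem_eq_inf S' hS (fun i => w.v (t i))
          have haj : a ≠ j := fun h => ha (h ▸ hj)
          have heq : w.v (t a) = w.v (t j) := by rw [hne, ihv, hjeq]
          have htop := hd a (Finset.mem_insert_self a S') j (Finset.mem_insert_of_mem hj) haj heq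
          have htop' : w.v (∑ i ∈ S', t i) = ⊤ := hne ▸ htop
          have hz : (∑ i ∈ S', t i) = 0 := (w.eq_top_iff _).mp htop'
          rw [hz, add_zero, htop, ← ihv, htop']
          simp
      · rw [w.v_add_eq_of_ne hne, ihv]

lemma v_pow (x : F) (n : ℕ) {m : ℤ} (hx : w.v x = (m : WithTop ℤ)) :
    w.v (x ^ n) = ((n * m : ℤ) : WithTop ℤ) := by
  induction n with
  | zero => simpa using w.map_one
  | succ n ih =>
      rw [pow_succ, w.map_mul, ih, hx, ← WithTop.coe_add]
      exact congrArg _ (by push_cast; ring)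

end CompleteDiscreteValuation
/-- Let `L/K` be a totally ramified Galois extension of degree `p` of
complete discrete valued fields of characteristic `p` with ramification break `s`, and
let `λ ∈ L` be a root of `X^p - X - f` where `v_K(f) = -s` and `gcd(s, p) = 1`.  Then
the trace-zero elements of `O_L` are exactly
`{ Σ_{i ≤ p-2} aᵢ λ^i : aᵢ ∈ K, v_K(aᵢ) ≥ i s / p }`. -/
theorem trace_zero_integers_eq_artin_schreier_span
    (p : ℕ) (hp : p.Prime)
    {K L : Type*} [Field K] [Field L] [Algebra K L] [CharP K p]
    (wK : CompleteDiscreteValuation K) (wL : CompleteDiscreteValuation L)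
    [IsGalois K L] [FiniteDimensional K L] (hdeg : Module.finrank K L = p)
    (htot : ∀ x : K, wL.v (algebraMap K L x) = p • wK.v x)
    (s : ℕ) (hs : IsRamificationBreak K wL s) (hcop : Nat.Coprime s p)
    (f : K) (hf : wK.v f = ((-(s : ℤ) : ℤ) : WithTop ℤ))
    (lam : L) (hlam : lam ^ p - lam = algebraMap K L f) :
    ∀ x : L, (x ∈ wL.integers ∧ ∑ τ : L ≃ₐ[K] L, τ x = 0) ↔
      ∃ a : ℕ → K,
        x = ∑ i ∈ Finset.range (p - 1), algebraMap K L (a i) * lam ^ i ∧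
        ∀ i < p - 1, ∀ m : ℤ, wK.v (a i) = (m : WithTop ℤ) →
          (i : ℚ) * (s : ℚ) / (p : ℚ) ≤ (m : ℚ) := by
  haveI : Fact p.Prime := ⟨hp⟩
  have hp2 : 2 ≤ p := hp.two_le
  haveI : CharP L p := charP_of_injective_algebraMap (algebraMap K L).injective p
  set ι := algebraMap K L with hι
  have hιinj : Function.Injective ι := (algebraMap K L).injective
  have hs1 : 1 ≤ s := by
    rcases Nat.eq_zero_or_pos s with h | h
    · exfalso
      rw [h, Nat.coprime_zero_left] at hcop
      omega
    · exact h
  have hpns : ¬ p ∣ s := by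
    intro h
    have h1 : p ∣ Nat.gcd s p := Nat.dvd_gcd h dvd_rfl
    rw [hcop] at h1
    have := Nat.le_of_dvd one_pos h1
    omega
  have hfin : ∀ a : K, a ≠ 0 → ∃ m : ℤ, wK.v a = (m : WithTop ℤ) := by
    intro a ha
    cases h : wK.v a with
    | top => exact absurd ((wK.eq_top_iff a).mp h) ha
    | coe m => exact ⟨m, rfl⟩
  -- valuation of images of K
  have hvι : ∀ (a : K) (m : ℤ), wK.v a = (m : WithTop ℤ) →
      wL.v (ι a) = ((p * m : ℤ) : WithTop ℤ) := by
    intro a m hm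
    rw [htot, hm, ← WithTop.coe_nsmul, nsmul_eq_mul]
  -- lam is nonzero
  have hf0 : f ≠ 0 := by
    intro h
    rw [h, wK.v_zero] at hf
    exact (WithTop.coe_ne_top (a := (-(s:ℤ)))) hf.symm
  have hlam0 : lam ≠ 0 := by
    intro h
    apply hf0
    apply hιinj
    rw [← hlam, h, map_zero]
    simp [hp.pos.ne']
  -- valuation of lam
  have hvlam : wL.v lam = ((-(s : ℤ) : ℤ) : WithTop ℤ) := by
    have hvf : wL.v (ι f) = ((-((p:ℤ) * s) : ℤ) : WithTop ℤ) := by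
      rw [hvι f _ hf]
      congr 1
      ring
    obtain ⟨m, hm⟩ : ∃ m : ℤ, wL.v lam = (m : WithTop ℤ) := by
      cases h : wL.v lam with
      | top => exact absurd ((wL.eq_top_iff lam).mp h) hlam0
      | coe m => exact ⟨m, rfl⟩
    have hneg : m < 0 := by
      by_contra hm0
      push_neg at hm0
      have h1 : (0 : WithTop ℤ) ≤ wL.v (lam ^ p) := by
        rw [wL.v_pow lam p hm]
        exact_mod_cast mul_nonneg (by positivity) hm0
      have h2 : (0 : WithTop ℤ) ≤ wL.v (-lam) := by
        rw [wL.v_neg, hm]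
        exact_mod_cast hm0
      have h3 : (0 : WithTop ℤ) ≤ wL.v (lam ^ p - lam) := by
        rw [sub_eq_add_neg]
        exact le_trans (le_min h1 h2) (wL.min_le_add _ _)
      rw [hlam, hvf] at h3
      have h4 : (0:ℤ) ≤ -((p:ℤ)*s) := by exact_mod_cast h3
      nlinarith [hs1, hp2]
    have hlt : wL.v (lam ^ p) < wL.v (-lam) := by
      rw [wL.v_pow lam p hm, wL.v_neg, hm]
      have : (p:ℤ) * m < m := by nlinarith [hp2]
      exact_mod_cast this
    have h4 : wL.v (lam ^ p - lam) = (((p:ℤ)*m : ℤ) : WithTop ℤ) := by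
      rw [sub_eq_add_neg, wL.v_add_eq_left hlt, wL.v_pow lam p hm]
    rw [hlam, hvf] at h4
    have h5 : -((p:ℤ)*(s:ℤ)) = (p:ℤ)*m := by exact_mod_cast h4
    have hp0 : (p:ℤ) ≠ 0 := by positivity
    have h6 : m = -(s:ℤ) := by
      have : (p:ℤ) * m = (p:ℤ) * (-(s:ℤ)) := by linarith
      exact mul_left_cancel₀ hp0 this
    rw [hm, h6]
  -- valuation of a typical term
  have hvterm : ∀ (a : K) (i : ℕ) (m : ℤ), wK.v a = (m : WithTop ℤ) →
      wL.v (ι a * lam ^ i) = (((p : ℤ) * m - (i : ℤ) * (s : ℤ) : ℤ) : WithTop ℤ) := by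
    intro a i m hm
    rw [wL.map_mul, hvι a m hm, wL.v_pow lam i hvlam, ← WithTop.coe_add]
    congr 1
    push_cast
    ring
  -- lam is not in K
  have hlamK : lam ∉ Set.range ι := by
    rintro ⟨a, rfl⟩
    have ha0 : a ≠ 0 := fun h => hlam0 (by rw [h, map_zero])
    obtain ⟨m, hm⟩ := hfin a ha0
    have h1 := hvι a m hm
    rw [hvlam] at h1
    have h2 : -(s:ℤ) = (p:ℤ) * m := by exact_mod_cast h1
    have h3 : (p:ℤ) ∣ (s:ℤ) := ⟨-m, by linarith⟩
    exact hpns (Int.natCast_dvd_natCast.mp h3)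
  -- power basis
  have hint : IsIntegral K lam := IsIntegral.of_finite K lam
  obtain ⟨pb, hgen, hdim⟩ : ∃ pb : PowerBasis K L, pb.gen = lam ∧ pb.dim = p := by
    have hfr : Module.finrank K (IntermediateField.adjoin K {lam}) =
        (minpoly K lam).natDegree := IntermediateField.adjoin.finrank hint
    have hdvd : (minpoly K lam).natDegree ∣ p := by
      refine ⟨Module.finrank (IntermediateField.adjoin K {lam}) L, ?_⟩
      rw [← hfr, ← hdeg, Module.finrank_mul_finrank]
    have hne1 : (minpoly K lam).natDegree ≠ 1 := by
      intro h1
      rw [h1, IntermediateField.finrank_eq_one_iff] at hfr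
      have := IntermediateField.mem_adjoin_simple_self K lam
      rw [hfr, IntermediateField.mem_bot] at this
      exact hlamK this
    have hd : (minpoly K lam).natDegree = p :=
      ((hp.eq_one_or_self_of_dvd _ hdvd).resolve_left hne1)
    have htop : IntermediateField.adjoin K {lam} = ⊤ := by
      refine IntermediateField.eq_of_le_of_finrank_eq le_top ?_
      rw [hfr, hd, IntermediateField.finrank_top', hdeg]
    let eqv : (IntermediateField.adjoin K {lam}) ≃ₐ[K] L :=
      (IntermediateField.equivOfEq htop).trans IntermediateField.topEquiv
    refine ⟨(IntermediateField.adjoin.powerBasis hint).map eqv, ?_, ?_⟩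
    · rw [PowerBasis.map_gen, IntermediateField.adjoin.powerBasis_gen]
      rfl
    · rw [PowerBasis.map_dim, IntermediateField.adjoin.powerBasis_dim, hd]
  -- distinctness of valuations of terms
  have hdist : ∀ (b : ℕ → K), ∀ i ∈ Finset.range p, ∀ j ∈ Finset.range p, i ≠ j →
      wL.v (ι (b i) * lam ^ i) = wL.v (ι (b j) * lam ^ j) →
      wL.v (ι (b i) * lam ^ i) = ⊤ := by
    intro b i hi j hj hij heq
    by_contra htop
    have hbi : b i ≠ 0 := by
      intro h
      exact htop (by rw [h, map_zero, zero_mul, wL.v_zero])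
    have hbj : b j ≠ 0 := by
      intro h
      rw [h, map_zero, zero_mul, wL.v_zero] at heq
      exact htop heq
    obtain ⟨mi, hmi⟩ := hfin (b i) hbi
    obtain ⟨mj, hmj⟩ := hfin (b j) hbj
    rw [hvterm _ _ _ hmi, hvterm _ _ _ hmj] at heq
    have h1 : (p:ℤ)*mi - (i:ℤ)*(s:ℤ) = (p:ℤ)*mj - (j:ℤ)*(s:ℤ) := by exact_mod_cast heq
    have h2 : (p:ℤ) ∣ ((i:ℤ) - (j:ℤ)) * (s:ℤ) := ⟨mi - mj, by ring_nf; linarith⟩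
    have hprime : Prime (p:ℤ) := Nat.prime_iff_prime_int.mp hp
    have h3 : (p:ℤ) ∣ ((i:ℤ) - (j:ℤ)) := by
      rcases hprime.dvd_mul.mp h2 with h | h
      · exact h
      · exact absurd (Int.natCast_dvd_natCast.mp h) hpns
    have hi' : i < p := Finset.mem_range.mp hi
    have hj' : j < p := Finset.mem_range.mp hj
    have h4 : (i:ℤ) - (j:ℤ) = 0 := by
      refine Int.eq_zero_of_abs_lt_dvd h3 ?_
      rw [abs_lt]
      constructor <;> [omega; omega]
    exact hij (by omega)
  -- Galois action on lam : σ lam = lam + (element of the prime field)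
  obtain ⟨c, hc, hcbij⟩ : ∃ c : (L ≃ₐ[K] L) → ZMod p,
      (∀ σ : L ≃ₐ[K] L, σ lam = lam + (ZMod.castHom dvd_rfl L) (c σ)) ∧
      Function.Bijective c := by
    have hroot : ∀ t : L, t ^ p = t → ∃ cc : ZMod p, (ZMod.castHom dvd_rfl L) cc = t := by
      intro t ht
      by_contra hno
      push_neg at hno
      set q : Polynomial L := Polynomial.X ^ p - Polynomial.X with hq
      have hdegq : q.natDegree = p := by
        have hd1 : q.degree = p := by
          rw [hq]
          rw [Polynomial.degree_sub_eq_left_of_degree_lt]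
          · exact Polynomial.degree_X_pow p
          · rw [Polynomial.degree_X, Polynomial.degree_X_pow]
            exact_mod_cast hp.one_lt
        exact Polynomial.natDegree_eq_of_degree_eq_some hd1
      have hq0 : q ≠ 0 := by
        intro h
        rw [h, Polynomial.natDegree_zero] at hdegq
        omega
      have hinj : Function.Injective (@ZMod.castHom p p (dvd_refl p) L _ _) :=
        @ZMod.castHom_injective p L _ _
      set T : Finset L := insert t (Finset.univ.image (ZMod.castHom (dvd_refl p) L)) with hT
      have hcardT : T.card = p + 1 := by
        rw [hT, Finset.card_insert_of_notMem, Finset.card_image_of_injective _ hinj,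
          Finset.card_univ, ZMod.card]
        intro hmem
        obtain ⟨cc, _, hcc⟩ := Finset.mem_image.mp hmem
        exact hno cc hcc
      have hsub : T ⊆ q.roots.toFinset := by
        intro y hy
        rw [Multiset.mem_toFinset, Polynomial.mem_roots hq0]
        rcases Finset.mem_insert.mp hy with rfl | hy'
        · show q.IsRoot y
          simp [hq, Polynomial.IsRoot, ht]
        · obtain ⟨cc, _, rfl⟩ := Finset.mem_image.mp hy'
          show q.IsRoot _
          simp only [hq, Polynomial.IsRoot, Polynomial.eval_sub, Polynomial.eval_pow,
            Polynomial.eval_X]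
          rw [← map_pow, ZMod.pow_card, sub_self]
      have hle := (Finset.card_le_card hsub).trans
        ((Multiset.toFinset_card_le _).trans (Polynomial.card_roots' q))
      rw [hcardT, hdegq] at hle
      omega
    have hfix : ∀ σ : L ≃ₐ[K] L, (σ lam - lam) ^ p = σ lam - lam := by
      intro σ
      have h1 : (σ lam) ^ p - σ lam = lam ^ p - lam := by
        have h2 := congrArg σ hlam
        rw [map_sub, _root_.map_pow, hι, AlgEquiv.commutes] at h2
        rw [h2, hlam]
      rw [sub_pow_char]
      linear_combination h1
    choose cc hcc using fun σ : L ≃ₐ[K] L => hroot _ (hfix σ)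
    refine ⟨cc, fun σ => by rw [hcc σ]; ring, ?_⟩
    rw [Fintype.bijective_iff_injective_and_card]
    constructor
    · intro σ τ h
      have h1 : σ lam = τ lam := by
        have e1 := hcc σ
        rw [h, hcc τ] at e1
        linear_combination -e1
      apply AlgEquiv.coe_algHom_injective
      apply pb.algHom_ext
      rw [hgen]
      exact h1
    · rw [ZMod.card, ← Nat.card_eq_fintype_card, IsGalois.card_aut_eq_finrank, hdeg]
  -- power sums over the prime field
  have Spow : ∀ k < p - 1, ∑ cc : ZMod p, ((ZMod.castHom dvd_rfl L) cc) ^ k = 0 := by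
    intro k hk
    have h1 : ∑ cc : ZMod p, ((ZMod.castHom dvd_rfl L) cc) ^ k =
        (ZMod.castHom dvd_rfl L) (∑ cc : ZMod p, cc ^ k) := by
      rw [map_sum]
      exact Finset.sum_congr rfl fun cc _ => (map_pow _ _ _).symm
    rw [h1, FiniteField.sum_pow_lt_card_sub_one (ZMod p) k (by rwa [ZMod.card]), map_zero]
  have hZsum : ∑ cc : ZMod p, cc ^ (p - 1) = (-1 : ZMod p) := by
    rw [← Finset.add_sum_erase _ _ (Finset.mem_univ (0 : ZMod p))]
    rw [zero_pow (by omega : p - 1 ≠ 0)]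
    rw [Finset.sum_congr rfl (fun cc hcc => ZMod.pow_card_sub_one_eq_one
      (Finset.mem_erase.mp hcc).1)]
    rw [Finset.sum_const, Finset.card_erase_of_mem (Finset.mem_univ _), Finset.card_univ,
      ZMod.card, zero_add, nsmul_eq_mul, mul_one]
    have h1 : ((p - 1 : ℕ) : ZMod p) = ((p : ℕ) : ZMod p) - 1 := by
      rw [Nat.cast_sub (by omega : 1 ≤ p), Nat.cast_one]
    rw [h1, ZMod.natCast_self]
    ring
  have Slast : ∑ cc : ZMod p, ((ZMod.castHom dvd_rfl L) cc) ^ (p - 1) = -1 := by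
    have h1 : ∑ cc : ZMod p, ((ZMod.castHom dvd_rfl L) cc) ^ (p - 1) =
        (ZMod.castHom dvd_rfl L) (∑ cc : ZMod p, cc ^ (p - 1)) := by
      rw [map_sum]
      exact Finset.sum_congr rfl fun cc _ => (map_pow _ _ _).symm
    rw [h1, hZsum, map_neg, _root_.map_one]
  -- trace of powers of lam
  have hreindex : ∀ i : ℕ, ∑ τ : L ≃ₐ[K] L, (τ lam) ^ i =
      ∑ cc : ZMod p, (lam + (ZMod.castHom dvd_rfl L) cc) ^ i := by
    intro i
    rw [Finset.sum_congr rfl (fun τ _ => by rw [hc τ])]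
    exact Fintype.sum_bijective c hcbij _ _ (fun τ => rfl)
  have Tr0 : ∀ i < p - 1, ∑ τ : L ≃ₐ[K] L, (τ lam) ^ i = 0 := by
    intro i hi
    rw [hreindex]
    calc ∑ cc : ZMod p, (lam + (ZMod.castHom dvd_rfl L) cc) ^ i
        = ∑ cc : ZMod p, ∑ j ∈ Finset.range (i+1),
            lam ^ j * ((ZMod.castHom dvd_rfl L) cc) ^ (i - j) * (Nat.choose i j : L) :=
          Finset.sum_congr rfl fun cc _ => add_pow lam _ i
      _ = ∑ j ∈ Finset.range (i+1), ∑ cc : ZMod p,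
            lam ^ j * ((ZMod.castHom dvd_rfl L) cc) ^ (i - j) * (Nat.choose i j : L) :=
          Finset.sum_comm
      _ = 0 := by
          refine Finset.sum_eq_zero fun j hj => ?_
          have hij : i - j < p - 1 := lt_of_le_of_lt (Nat.sub_le i j) hi
          have hre : ∀ cc : ZMod p,
              lam ^ j * ((ZMod.castHom dvd_rfl L) cc) ^ (i - j) * (Nat.choose i j : L) =
              ((ZMod.castHom dvd_rfl L) cc) ^ (i - j) * (lam ^ j * (Nat.choose i j : L)) :=
            fun cc => by ring
          rw [Finset.sum_congr rfl fun cc _ => hre cc, ← Finset.sum_mul,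
            Spow (i - j) hij, zero_mul]
  have TrLast : ∑ τ : L ≃ₐ[K] L, (τ lam) ^ (p - 1) = -1 := by
    rw [hreindex]
    calc ∑ cc : ZMod p, (lam + (ZMod.castHom dvd_rfl L) cc) ^ (p - 1)
        = ∑ cc : ZMod p, ∑ j ∈ Finset.range (p-1+1),
            lam ^ j * ((ZMod.castHom dvd_rfl L) cc) ^ (p - 1 - j) * (Nat.choose (p-1) j : L) :=
          Finset.sum_congr rfl fun cc _ => add_pow lam _ (p-1)
      _ = ∑ j ∈ Finset.range (p-1+1), ∑ cc : ZMod p,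
            lam ^ j * ((ZMod.castHom dvd_rfl L) cc) ^ (p - 1 - j) * (Nat.choose (p-1) j : L) :=
          Finset.sum_comm
      _ = -1 := by
          rw [Finset.sum_eq_single_of_mem 0 (Finset.mem_range.mpr (by omega))]
          · simp_rw [pow_zero, one_mul, Nat.sub_zero, Nat.choose_zero_right, Nat.cast_one,
              mul_one]
            exact Slast
          · intro j hj hj0
            have hlt : p - 1 - j < p - 1 := by
              have := Finset.mem_range.mp hj
              omega
            have hre : ∀ cc : ZMod p,
                lam ^ j * ((ZMod.castHom dvd_rfl L) cc) ^ (p - 1 - j) * (Nat.choose (p-1) j : L) =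
                ((ZMod.castHom dvd_rfl L) cc) ^ (p - 1 - j) * (lam ^ j * (Nat.choose (p-1) j : L)) :=
              fun cc => by ring
            rw [Finset.sum_congr rfl fun cc _ => hre cc, ← Finset.sum_mul,
              Spow _ hlt, zero_mul]
  -- the trace of a sum of terms
  have hTrSum : ∀ (n : ℕ) (b : ℕ → K),
      ∑ τ : L ≃ₐ[K] L, τ (∑ i ∈ Finset.range n, ι (b i) * lam ^ i) =
      ∑ i ∈ Finset.range n, ι (b i) * ∑ τ : L ≃ₐ[K] L, (τ lam) ^ i := by
    intro n b
    have h1 : ∀ τ : L ≃ₐ[K] L, τ (∑ i ∈ Finset.range n, ι (b i) * lam ^ i) =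
        ∑ i ∈ Finset.range n, ι (b i) * (τ lam) ^ i := by
      intro τ
      rw [map_sum]
      exact Finset.sum_congr rfl fun i _ => by
        rw [_root_.map_mul, _root_.map_pow, hι, AlgEquiv.commutes]
    rw [Finset.sum_congr rfl (fun τ _ => h1 τ), Finset.sum_comm]
    exact Finset.sum_congr rfl fun i _ => by rw [Finset.mul_sum]
  intro x
  constructor
  · rintro ⟨hxint, hxtr⟩
    -- write x in the power basis
    obtain ⟨b, hxb⟩ : ∃ b : ℕ → K, x = ∑ i ∈ Finset.range p, ι (b i) * lam ^ i := by
      refine ⟨fun i => if h : i < p then pb.basis.repr x (Fin.cast hdim.symm ⟨i, h⟩) else 0, ?_⟩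
      have h0 := pb.basis.sum_repr x
      have h3 : ∑ i ∈ Finset.range p,
          ι (if h : i < p then pb.basis.repr x (Fin.cast hdim.symm ⟨i, h⟩) else 0) * lam ^ i
          = ∑ j : Fin pb.dim, pb.basis.repr x j • pb.basis j := by
        rw [← Fin.sum_univ_eq_sum_range (fun i =>
          ι (if h : i < p then pb.basis.repr x (Fin.cast hdim.symm ⟨i, h⟩) else 0) * lam ^ i) p]
        refine Fintype.sum_equiv (finCongr hdim.symm) _ _ ?_
        intro i
        rw [pb.coe_basis, Algebra.smul_def, hgen]
        simp only [dif_pos i.isLt, finCongr_apply, Fin.coe_cast, Fin.eta]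
        rfl
      rw [h3, h0]
    have hsucc : p - 1 + 1 = p := by omega
    have hb : b (p - 1) = 0 := by
      have h1 := hTrSum p b
      rw [← hxb, hxtr] at h1
      have h2 := Finset.sum_range_succ
        (fun i => ι (b i) * ∑ τ : L ≃ₐ[K] L, (τ lam) ^ i) (p-1)
      rw [hsucc] at h2
      rw [h2] at h1
      rw [Finset.sum_eq_zero (fun i hi => by
        rw [Tr0 i (Finset.mem_range.mp hi), mul_zero]), zero_add, TrLast, mul_neg_one] at h1
      exact hιinj (by rw [neg_eq_zero.mp h1.symm, map_zero])
    have hxb' : x = ∑ i ∈ Finset.range (p-1), ι (b i) * lam ^ i := by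
      have h2 := Finset.sum_range_succ (fun i => ι (b i) * lam ^ i) (p-1)
      rw [hsucc] at h2
      rw [hxb, h2, hb, map_zero, zero_mul, add_zero]
    refine ⟨b, hxb', ?_⟩
    intro i hi m hm
    have hvx := wL.v_sum_eq_inf (fun i => ι (b i) * lam ^ i) (Finset.range p) (hdist b)
    rw [← hxb] at hvx
    have h0x : (0 : WithTop ℤ) ≤ wL.v x := hxint
    have hle : wL.v x ≤ wL.v (ι (b i) * lam ^ i) := by
      rw [hvx]
      exact Finset.inf_le (Finset.mem_range.mpr (by omega))
    have h1 : (0 : WithTop ℤ) ≤ (((p:ℤ)*m - (i:ℤ)*(s:ℤ) : ℤ) : WithTop ℤ) := by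
      rw [← hvterm (b i) i m hm]
      exact le_trans h0x hle
    have h2 : (0:ℤ) ≤ (p:ℤ)*m - (i:ℤ)*(s:ℤ) := by exact_mod_cast h1
    rw [div_le_iff₀ (by positivity : (0:ℚ) < (p:ℚ))]
    have h3 : ((i:ℤ)*(s:ℤ) : ℚ) ≤ ((p:ℤ)*m : ℚ) := by
      exact_mod_cast (by linarith : (i:ℤ)*(s:ℤ) ≤ (p:ℤ)*m)
    push_cast at h3 ⊢
    linarith
  · rintro ⟨a, hxa, hcond⟩
    constructor
    · rw [hxa]
      apply Subring.sum_mem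
      intro i hi
      rw [mem_integers_iff]
      by_cases h0 : a i = 0
      · rw [h0, map_zero, zero_mul, wL.v_zero]
        exact le_top
      · obtain ⟨m, hm⟩ := hfin (a i) h0
        have hq := hcond i (Finset.mem_range.mp hi) m hm
        rw [div_le_iff₀ (by positivity : (0:ℚ) < (p:ℚ))] at hq
        have h2 : (0:ℤ) ≤ (p:ℤ)*m - (i:ℤ)*(s:ℤ) := by
          have h3 : ((i:ℤ)*(s:ℤ) : ℚ) ≤ ((p:ℤ)*m : ℚ) := by push_cast; linarith
          have h4 : (i:ℤ)*(s:ℤ) ≤ (p:ℤ)*m := by exact_mod_cast h3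
          linarith
        rw [hvterm (a i) i m hm]
        exact_mod_cast h2
    · rw [hxa, hTrSum]
      exact Finset.sum_eq_zero fun i hi => by
        rw [Tr0 i (Finset.mem_range.mp hi), mul_zero]
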